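/- Fix $n_0 \in \mathbb{Z}_+$. The function $h_1(p) = 1 - (1-p)^{n_0} - e^{-n_0 D[2p/(1-p), p]}$ is strictly increasing on $(0, 1/3)$, satisfies $\lim_{p \to 0^+} h_1(p) = -1$, and $\lim_{p \to 1/3^-} h_1(p) = 1 - (1/3)^{n_0} - (2/3)^{n_0}$. -/

import Mathlib

/-- Bernoulli Kullback-Leibler divergence. -/
noncomputable def KL (x y : ℝ) : ℝ :=
  x * Real.log (x / y) + (1 - x) * Real.log ((1 - x) / (1 - y))

open Real Filter Set

/-- Numerator of the simplified form of `KL (2p/(1-p)) p`. -/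
noncomputable def Nf (p : ℝ) : ℝ :=
  2*p*Real.log 2 + (1-3*p)*Real.log (1-3*p) - (2-4*p)*Real.log (1-p)

lemma KL_eq_Nf {p : ℝ} (hp0 : 0 < p) (hp3 : p < 1/3) :
    KL (2*p/(1-p)) p = Nf p / (1-p) := by
  have h1 : (0:ℝ) < 1 - p := by linarith
  have h3 : (0:ℝ) < 1 - 3*p := by linarith
  have hx : (2*p/(1-p))/p = 2/(1-p) := by field_simp
  have hx2 : 1 - 2*p/(1-p) = (1-3*p)/(1-p) := by field_simp; ring
  have hx3 : ((1-3*p)/(1-p))/(1-p) = (1-3*p)/((1-p)*(1-p)) := div_div _ _ _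
  unfold KL
  rw [hx, hx2, hx3, Real.log_div two_ne_zero h1.ne',
    Real.log_div h3.ne' (mul_ne_zero h1.ne' h1.ne'), Real.log_mul h1.ne' h1.ne']
  unfold Nf
  field_simp
  ring

lemma Nf_deriv {p : ℝ} (hp0 : 0 < p) (hp3 : p < 1/3) :
    HasDerivAt Nf (2*Real.log 2 - 3*Real.log (1-3*p) - 3 + 4*Real.log (1-p) + (2-4*p)/(1-p)) p := by
  have h1 : (0:ℝ) < 1 - p := by linarith
  have h3 : (0:ℝ) < 1 - 3*p := by linarith
  have h1d : HasDerivAt (fun q:ℝ => 1-q) (-1) p := by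
    simpa using (hasDerivAt_id p).const_sub 1
  have h3d : HasDerivAt (fun q:ℝ => 1-3*q) (-3) p := by
    simpa using ((hasDerivAt_id p).const_mul 3).const_sub 1
  have h2d : HasDerivAt (fun q:ℝ => 2-4*q) (-4) p := by
    simpa using ((hasDerivAt_id p).const_mul 4).const_sub 2
  have t1 : HasDerivAt (fun q:ℝ => 2*q*Real.log 2) (2*Real.log 2) p := by
    simpa using ((hasDerivAt_id p).const_mul 2).mul_const (Real.log 2)
  have t2 : HasDerivAt (fun q:ℝ => (1-3*q)*Real.log (1-3*q))
      ((-3)*Real.log (1-3*p) + (1-3*p)*((-3)/(1-3*p))) p :=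
    h3d.mul (h3d.log h3.ne')
  have t3 : HasDerivAt (fun q:ℝ => (2-4*q)*Real.log (1-q))
      ((-4)*Real.log (1-p) + (2-4*p)*((-1)/(1-p))) p :=
    h2d.mul (h1d.log h1.ne')
  have := (t1.add t2).sub t3
  refine this.congr_deriv ?_
  field_simp
  ring

/-- The (positive) derivative of the simplified function. -/
noncomputable def Df (n₀ : ℕ) (p : ℝ) : ℝ :=
  (n₀:ℝ) * (1-p)^(n₀-1) + (n₀:ℝ) * Real.exp (-(n₀:ℝ)*(Nf p/(1-p))) *
    ((2*Real.log 2 - 2*Real.log (1-3*p) + 2*Real.log (1-p) - (1+p))/(1-p)^2)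

lemma G_deriv (n₀ : ℕ) {p : ℝ} (hp0 : 0 < p) (hp3 : p < 1/3) :
    HasDerivAt (fun q : ℝ => 1 - (1-q)^n₀ - Real.exp (-(n₀:ℝ)*(Nf q/(1-q)))) (Df n₀ p) p := by
  have h1 : (0:ℝ) < 1 - p := by linarith
  have h1d : HasDerivAt (fun q:ℝ => 1-q) (-1) p := by
    simpa using (hasDerivAt_id p).const_sub 1
  have hpow : HasDerivAt (fun q:ℝ => (1-q)^n₀) ((n₀:ℝ) * (1-p)^(n₀-1) * (-1)) p := h1d.pow n₀
  have hN := Nf_deriv hp0 hp3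
  have hdiv : HasDerivAt (fun q:ℝ => Nf q / (1-q))
      (((2*Real.log 2 - 3*Real.log (1-3*p) - 3 + 4*Real.log (1-p) + (2-4*p)/(1-p)) * (1-p)
        - Nf p * (-1)) / (1-p)^2) p := hN.div h1d h1.ne'
  have hexp := ((hdiv.const_mul (-(n₀:ℝ))).exp)
  have := ((hasDerivAt_const p (1:ℝ)).sub hpow).sub hexp
  refine this.congr_deriv ?_
  unfold Df Nf
  have h3 : (0:ℝ) < 1 - 3*p := by linarith
  field_simp
  ring

lemma Df_pos (n₀ : ℕ) (hn₀ : 1 ≤ n₀) {p : ℝ} (hp0 : 0 < p) (hp3 : p < 1/3) :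
    0 < Df n₀ p := by
  have h1 : (0:ℝ) < 1 - p := by linarith
  have h3 : (0:ℝ) < 1 - 3*p := by linarith
  have hlog : Real.log (1-3*p) < Real.log (1-p) := Real.log_lt_log h3 (by linarith)
  have hlog2 : (0.6931471803 : ℝ) < Real.log 2 := Real.log_two_gt_d9
  have hK : 0 < 2*Real.log 2 - 2*Real.log (1-3*p) + 2*Real.log (1-p) - (1+p) := by
    nlinarith
  have hn : (0:ℝ) < (n₀:ℝ) := by exact_mod_cast hn₀
  unfold Df
  positivity

lemma Nf_contAt {a : ℝ} (ha : 1 - a ≠ 0) : ContinuousAt Nf a := by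
  have hml : Continuous (fun p:ℝ => (1-3*p)*Real.log (1-3*p)) := by
    have := Real.continuous_mul_log.comp (by continuity : Continuous (fun p:ℝ => 1-3*p))
    simpa [Function.comp_def] using this
  have h1 : ContinuousAt (fun p:ℝ => Real.log (1-p)) a :=
    ContinuousAt.comp (Real.continuousAt_log ha) (by fun_prop)
  unfold Nf
  exact (((by fun_prop : ContinuousAt (fun p:ℝ => 2*p*Real.log 2) a).add
    hml.continuousAt).sub (ContinuousAt.mul (by fun_prop) h1))

lemma G_contAt (n₀ : ℕ) {a : ℝ} (ha : 1 - a ≠ 0) :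
    ContinuousAt (fun q : ℝ => 1 - (1-q)^n₀ - Real.exp (-(n₀:ℝ)*(Nf q/(1-q)))) a := by
  have hdiv : ContinuousAt (fun q:ℝ => Nf q / (1-q)) a := (Nf_contAt ha).div (by fun_prop) ha
  have h : ContinuousAt (fun q:ℝ => -(n₀:ℝ)*(Nf q/(1-q))) a := hdiv.const_mul _
  exact (continuousAt_const.sub (by fun_prop)).sub (Real.continuous_exp.continuousAt.comp h)

lemma Nf_zero : Nf 0 = 0 := by unfold Nf; norm_num

lemma Nf_third : Nf (1/3) = 2/3 * Real.log 3 := by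
  unfold Nf
  rw [show (1:ℝ)-3*(1/3) = 0 by norm_num, show (1:ℝ)-1/3 = 2/3 by norm_num,
    Real.log_div (by norm_num) (by norm_num)]
  ring

/-- `h₁(p) = 1 - (1-p)^{n₀} - e^{-n₀ D[2p/(1-p), p]}` is strictly increasing
on `(0, 1/3)`, tends to `-1` as `p → 0⁺` and to `1 - (1/3)^{n₀} - (2/3)^{n₀}` as `p → 1/3⁻`. -/
theorem stmt_13 (n₀ : ℕ) (hn₀ : 1 ≤ n₀) :
    StrictMonoOn (fun p : ℝ => 1 - (1 - p) ^ n₀ - Real.exp (-(n₀ : ℝ) * KL (2 * p / (1 - p)) p))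
      (Set.Ioo (0 : ℝ) (1/3)) ∧
    Filter.Tendsto (fun p : ℝ => 1 - (1 - p) ^ n₀ - Real.exp (-(n₀ : ℝ) * KL (2 * p / (1 - p)) p))
      (nhdsWithin 0 (Set.Ioi 0)) (nhds (-1)) ∧
    Filter.Tendsto (fun p : ℝ => 1 - (1 - p) ^ n₀ - Real.exp (-(n₀ : ℝ) * KL (2 * p / (1 - p)) p))
      (nhdsWithin (1/3) (Set.Iio (1/3))) (nhds (1 - (1/3 : ℝ) ^ n₀ - (2/3 : ℝ) ^ n₀)) := by
  set F := fun p : ℝ => 1 - (1 - p) ^ n₀ - Real.exp (-(n₀ : ℝ) * KL (2 * p / (1 - p)) p) with hF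
  set G := fun q : ℝ => 1 - (1-q)^n₀ - Real.exp (-(n₀:ℝ)*(Nf q/(1-q))) with hG
  have hFG : ∀ p ∈ Set.Ioo (0:ℝ) (1/3), F p = G p := by
    intro p hp
    simp only [hF, hG, KL_eq_Nf hp.1 hp.2]
  -- derivative of F at points of the interval
  have key : ∀ p ∈ Set.Ioo (0:ℝ) (1/3), HasDerivAt F (Df n₀ p) p := by
    intro p hp
    have heq : F =ᶠ[nhds p] G :=
      Filter.eventually_of_mem (isOpen_Ioo.mem_nhds hp) (fun q hq => hFG q hq)
    exact (G_deriv n₀ hp.1 hp.2).congr_of_eventuallyEq heq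
  refine ⟨?_, ?_, ?_⟩
  · -- strict monotonicity
    apply strictMonoOn_of_deriv_pos (convex_Ioo (0:ℝ) (1/3))
    · exact fun x hx => ((key x hx).continuousAt).continuousWithinAt
    · intro x hx
      rw [interior_Ioo] at hx
      rw [(key x hx).deriv]
      exact Df_pos n₀ hn₀ hx.1 hx.2
  · -- limit at 0⁺
    have hmem : Set.Ioo (0:ℝ) (1/3) ∈ nhdsWithin (0:ℝ) (Set.Ioi 0) :=
      Ioo_mem_nhdsGT_of_mem (by norm_num : (0:ℝ) ∈ Set.Ico (0:ℝ) (1/3))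
    have hGv : G 0 = -1 := by
      simp only [hG, Nf_zero]
      norm_num
    have hGt : Filter.Tendsto G (nhdsWithin 0 (Set.Ioi 0)) (nhds (-1)) := by
      rw [← hGv]
      exact ((G_contAt n₀ (by norm_num)).tendsto).mono_left nhdsWithin_le_nhds
    exact hGt.congr' (Filter.eventually_of_mem hmem (fun q hq => (hFG q hq).symm))
  · -- limit at (1/3)⁻
    have hmem : Set.Ioo (0:ℝ) (1/3) ∈ nhdsWithin (1/3:ℝ) (Set.Iio (1/3)) :=
      Ioo_mem_nhdsLT_of_mem (by norm_num : (1/3:ℝ) ∈ Set.Ioc (0:ℝ) (1/3))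
    have hexp3 : Real.exp (-(n₀:ℝ) * Real.log 3) = (1/3:ℝ)^n₀ := by
      rw [show -(n₀:ℝ) * Real.log 3 = (n₀:ℝ) * Real.log (1/3) by
        rw [show (1:ℝ)/3 = 3⁻¹ by norm_num, Real.log_inv]; ring,
        Real.exp_nat_mul, Real.exp_log (by norm_num)]
    have hGv : G (1/3) = 1 - (1/3:ℝ)^n₀ - (2/3:ℝ)^n₀ := by
      simp only [hG, Nf_third]
      rw [show (2:ℝ)/3 * Real.log 3 / (1 - 1/3) = Real.log 3 by norm_num,
        show -(n₀:ℝ) * Real.log 3 = -(n₀:ℝ) * Real.log 3 by rfl, hexp3,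
        show (1:ℝ) - 1/3 = 2/3 by norm_num]
      ring
    have hGt : Filter.Tendsto G (nhdsWithin (1/3) (Set.Iio (1/3)))
        (nhds (1 - (1/3:ℝ)^n₀ - (2/3:ℝ)^n₀)) := by
      rw [← hGv]
      exact ((G_contAt n₀ (by norm_num)).tendsto).mono_left nhdsWithin_le_nhds
    exact hGt.congr' (Filter.eventually_of_mem hmem (fun q hq => (hFG q hq).symm))
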